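/- For the 3×3×3 tensor with Ω = {(1,1,1),(1,2,1),(2,1,1),(1,1,2),(3,3,1),(1,3,3),(3,1,3)} and all observed values equal to 1, there are exactly two real rank-one completions with a₁ = b₁ = 1: the all-ones solution a = b = c = (1,1,1), and the solution a = b = c = (1,1,−1). -/

import Mathlib

/-- Table 2: exactly two real rank-one completions, the all-ones one and
`a = b = c = (1,1,−1)`. -/
theorem table2_exactly_two_real_completions
    (a b c : Fin 3 → ℝ) :
    (a 0 = 1 ∧ b 0 = 1 ∧
      a 0 * b 0 * c 0 = 1 ∧
      a 0 * b 1 * c 0 = 1 ∧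
      a 1 * b 0 * c 0 = 1 ∧
      a 0 * b 0 * c 1 = 1 ∧
      a 2 * b 2 * c 0 = 1 ∧
      a 0 * b 2 * c 2 = 1 ∧
      a 2 * b 0 * c 2 = 1) ↔
    ((a = ![1, 1, 1] ∧ b = ![1, 1, 1] ∧ c = ![1, 1, 1]) ∨
      (a = ![1, 1, -1] ∧ b = ![1, 1, -1] ∧ c = ![1, 1, -1])) := by
  constructor
  · rintro ⟨ha0, hb0, h1, h2, h3, h4, h5, h6, h7⟩
    simp only [ha0, hb0, one_mul, mul_one] at h1 h2 h3 h4 h6 h7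
    -- h1 : c 0 = 1, h2 : b 1 * c 0 = 1, h3 : a 1 * c 0 = 1, h4 : c 1 = 1
    simp only [h1, mul_one] at h2 h3 h5
    -- h5 : a 2 * b 2 = 1, h6 : b 2 * c 2 = 1, h7 : a 2 * c 2 = 1
    have hc2 : c 2 = 1 ∨ c 2 = -1 := by
      have : (c 2 - 1) * (c 2 + 1) = 0 := by nlinarith [h5, h6, h7]
      rcases mul_eq_zero.1 this with h | h
      · left; linarith
      · right; linarith
    rcases hc2 with h | h <;> rw [h] at h6 h7
    · left
      refine ⟨?_, ?_, ?_⟩ <;> funext i <;> fin_cases i <;> simp_all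
    · right
      refine ⟨?_, ?_, ?_⟩ <;> funext i <;> fin_cases i <;>
        simp_all <;> nlinarith
  · rintro (⟨ha, hb, hc⟩ | ⟨ha, hb, hc⟩) <;> subst ha <;> subst hb <;> subst hc <;>
      norm_num [Matrix.cons_val_two, Matrix.tail_cons, Matrix.head_cons]
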